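/- Let N = R + iI be a complex symmetric n×n matrix with R, I real symmetric and I positive definite. Define the real 2n×2n matrix J (in n×n block form) by J = [[I^{-1}R, I^{-1}], [-I - R I^{-1} R, -R I^{-1}]]. Then J² = -Id_{2n}, J is a symplectomorphism of the standard symplectic form ω_{2n} on ℝ^{2n} (i.e. ω_{2n}(Jx, Jy) = ω_{2n}(x,y) for all x,y), and the bilinear form (x,y) ↦ ω_{2n}(Jx, y) is symmetric and positive definite. In other words, J is a taming of ω_{2n}. -/

import Mathlib

open Matrix

/-- The matrix of the standard symplectic form `ω_{2n}` on `ℝ^{2n} = ℝ^n ⊕ ℝ^n`: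
`Ω = [[0, I_n], [-I_n, 0]]`, so that `ω(x,y) = xᵀ Ω y`. -/
def OmegaMat (n : ℕ) : Matrix (Fin n ⊕ Fin n) (Fin n ⊕ Fin n) ℝ :=
  Matrix.fromBlocks 0 1 (-1) 0

/-- Congruence by an invertible matrix preserves positive definiteness (real case). -/
lemma posDef_conj_of_isUnit {m : Type*} [Fintype m] [DecidableEq m]
    {D C : Matrix m m ℝ} (hD : D.PosDef) (hC : IsUnit C) : (Cᵀ * D * C).PosDef := by
  refine Matrix.PosDef.of_dotProduct_mulVec_pos ?_ (fun x hx => ?_)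
  · have hDh : Dᵀ = D := hD.1
    show (Cᵀ * D * C)ᴴ = _
    simp [conjTranspose, Matrix.transpose_mul, hDh, Matrix.mul_assoc]
    rfl
  · have hx' : C *ᵥ x ≠ 0 := by
      intro h
      exact hx (Matrix.mulVec_injective_iff_isUnit.2 hC (h.trans (Matrix.mulVec_zero C).symm))
    have := hD.dotProduct_mulVec_pos hx'
    simpa [star_trivial, Matrix.mul_assoc, ← Matrix.mulVec_mulVec,
      Matrix.dotProduct_mulVec, Matrix.vecMul_transpose] using this

/-- A block-diagonal matrix with positive definite blocks is positive definite. -/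
lemma posDef_fromBlocks_diag {m o : Type*} [Fintype m] [Fintype o] [DecidableEq m] [DecidableEq o]
    {A : Matrix m m ℝ} {D : Matrix o o ℝ} (hA : A.PosDef) (hD : D.PosDef) :
    (Matrix.fromBlocks A 0 0 D).PosDef := by
  refine Matrix.PosDef.of_dotProduct_mulVec_pos ?_ (fun x hx => ?_)
  · show (Matrix.fromBlocks A 0 0 D)ᴴ = _
    rw [Matrix.fromBlocks_conjTranspose, hA.1, hD.1]
    simp
  · rw [← Sum.elim_comp_inl_inr x, Matrix.fromBlocks_mulVec]
    simp only [Matrix.zero_mulVec, add_zero, zero_add, star_trivial,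
      sumElim_dotProduct_sumElim, Sum.elim_comp_inl, Sum.elim_comp_inr]
    have hx' : x ∘ Sum.inl ≠ 0 ∨ x ∘ Sum.inr ≠ 0 := by
      by_contra h
      push_neg at h
      apply hx
      funext i
      cases i with
      | inl i => exact congrFun h.1 i
      | inr i => exact congrFun h.2 i
    rcases hx' with h | h
    · exact add_pos_of_pos_of_nonneg (by simpa using hA.dotProduct_mulVec_pos h) (by simpa using hD.posSemidef.dotProduct_mulVec_nonneg (x ∘ Sum.inr))
    · exact add_pos_of_nonneg_of_pos (by simpa using hA.posSemidef.dotProduct_mulVec_nonneg (x ∘ Sum.inl)) (by simpa using hD.dotProduct_mulVec_pos h)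

/-- Let `N = R + iI` be a complex symmetric matrix with `R, I` real symmetric and `I`
positive definite, and set `J = [[I⁻¹R, I⁻¹], [-I - R I⁻¹ R, -R I⁻¹]]`.  Then `J² = -1`,
`J` is a symplectomorphism of `ω_{2n}` (i.e. `Jᵀ Ω J = Ω`, so `ω(Jx,Jy) = ω(x,y)`), and
the bilinear form `(x,y) ↦ ω(Jx,y)`, whose matrix is `Jᵀ Ω`, is symmetric and positive
definite.  In other words, `J` is a taming of `ω_{2n}`. -/
theorem period_matrix_gives_taming (n : ℕ)
    (R I : Matrix (Fin n) (Fin n) ℝ)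
    (hR : R.IsSymm) (hI : I.IsSymm) (hIpd : I.PosDef)
    (J : Matrix (Fin n ⊕ Fin n) (Fin n ⊕ Fin n) ℝ)
    (hJ : J = Matrix.fromBlocks (I⁻¹ * R) I⁻¹ (-I - R * I⁻¹ * R) (-(R * I⁻¹))) :
    J * J = -1 ∧ Jᵀ * OmegaMat n * J = OmegaMat n ∧ (Jᵀ * OmegaMat n).PosDef := by
  have hIu : IsUnit I.det := (Matrix.isUnit_iff_isUnit_det I).mp hIpd.isUnit
  have hI1 : I * I⁻¹ = 1 := Matrix.mul_nonsing_inv I hIu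
  have hI2 : I⁻¹ * I = 1 := Matrix.nonsing_inv_mul I hIu
  have hRs : Rᵀ = R := hR
  have hIis : (I⁻¹)ᵀ = I⁻¹ := by rw [Matrix.transpose_nonsing_inv, hI]
  have hA1 : ∀ X : Matrix (Fin n) (Fin n) ℝ, I * (I⁻¹ * X) = X := fun X => by
    rw [← Matrix.mul_assoc, hI1, Matrix.one_mul]
  have hA2 : ∀ X : Matrix (Fin n) (Fin n) ℝ, I⁻¹ * (I * X) = X := fun X => by
    rw [← Matrix.mul_assoc, hI2, Matrix.one_mul]
  have hM : Jᵀ * OmegaMat n =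
      Matrix.fromBlocks (I + R * I⁻¹ * R) (R * I⁻¹) (I⁻¹ * R) I⁻¹ := by
    subst hJ
    simp only [OmegaMat, Matrix.fromBlocks_transpose, Matrix.fromBlocks_multiply,
      Matrix.transpose_neg, Matrix.transpose_sub, Matrix.transpose_mul, hRs, hIis, hI,
      Matrix.mul_zero, Matrix.zero_mul, Matrix.mul_one, Matrix.mul_neg, Matrix.neg_mul,
      Matrix.mul_assoc, add_zero, zero_add, neg_neg, neg_sub, sub_neg_eq_add]
    congr 1 <;> rw [hI] <;> abel
  refine ⟨?_, ?_, ?_⟩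
  · subst hJ
    simp only [Matrix.fromBlocks_multiply, Matrix.mul_assoc, hA1, hA2,
      Matrix.mul_add, Matrix.add_mul, Matrix.mul_sub, Matrix.sub_mul,
      Matrix.mul_neg, Matrix.neg_mul, Matrix.mul_one, Matrix.one_mul, hI1, hI2]
    rw [← Matrix.fromBlocks_one, Matrix.fromBlocks_neg]
    congr 1 <;> abel
  · rw [hM, hJ]
    simp only [OmegaMat, Matrix.fromBlocks_multiply,
      Matrix.mul_add, Matrix.add_mul, Matrix.mul_sub, Matrix.sub_mul,
      Matrix.mul_neg, Matrix.neg_mul, Matrix.mul_one, Matrix.one_mul,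
      Matrix.mul_assoc, hA1, hA2, hI1, hI2]
    rw [Matrix.fromBlocks_inj]
    exact ⟨by abel, by abel, by abel, by abel⟩
  · rw [hM]
    have hC : IsUnit (Matrix.fromBlocks 1 0 R 1 : Matrix (Fin n ⊕ Fin n) (Fin n ⊕ Fin n) ℝ) := by
      rw [Matrix.isUnit_iff_isUnit_det, Matrix.det_fromBlocks_zero₁₂]
      simp
    have hDpd : (Matrix.fromBlocks I 0 0 I⁻¹).PosDef :=
      posDef_fromBlocks_diag hIpd hIpd.inv
    have key := posDef_conj_of_isUnit hDpd hC
    have he : (Matrix.fromBlocks 1 0 R 1 : Matrix (Fin n ⊕ Fin n) (Fin n ⊕ Fin n) ℝ)ᵀ *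
        Matrix.fromBlocks I 0 0 I⁻¹ * Matrix.fromBlocks 1 0 R 1 =
        Matrix.fromBlocks (I + R * I⁻¹ * R) (R * I⁻¹) (I⁻¹ * R) I⁻¹ := by
      simp [Matrix.fromBlocks_transpose, Matrix.fromBlocks_multiply, hRs, Matrix.mul_assoc]
    rwa [he] at key
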